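/- Let D be an infinite digraph all of whose strong components are finite, and suppose that for all but finitely many strong components C of D there exists an edge with tail in C and head outside C. Then D contains an in-ray, or an out-ray, or a vertex of infinite in-degree. -/

import Mathlib

variable {V : Type*}

/-- An out-ray: a one-way infinite directed path oriented away from its start. -/
def IsOutRay (D : Digraph V) (f : ℕ → V) : Prop :=
  Function.Injective f ∧ ∀ n, D.Adj (f n) (f (n + 1))

/-- An in-ray: a one-way infinite directed path oriented towards its start. -/
def IsInRay (D : Digraph V) (f : ℕ → V) : Prop :=
  Function.Injective f ∧ ∀ n, D.Adj (f (n + 1)) (f n)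

/-- A finite directed path, given as a nonempty duplicate-free list of vertices. -/
def IsDipath (D : Digraph V) (p : List V) : Prop :=
  p ≠ [] ∧ p.Nodup ∧ p.Chain' D.Adj

def StartsIn (p : List V) (A : Set V) : Prop := ∃ a ∈ A, p.head? = some a

def EndsIn (p : List V) (B : Set V) : Prop := ∃ b ∈ B, p.getLast? = some b

def ListsDisjoint (p q : List V) : Prop := ∀ v ∈ p, v ∉ q

/-- There are infinitely many pairwise disjoint directed A–B paths. -/
def ManyDisjointPaths (D : Digraph V) (A B : Set V) : Prop :=
  ∃ P : ℕ → List V,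
    (∀ n, IsDipath D (P n) ∧ StartsIn (P n) A ∧ EndsIn (P n) B) ∧
    ∀ m n, m ≠ n → ListsDisjoint (P m) (P n)

/-- Two rays are equivalent: infinitely many disjoint paths in both directions. -/
def EquivRays (D : Digraph V) (R₁ R₂ : ℕ → V) : Prop :=
  ManyDisjointPaths D (Set.range R₁) (Set.range R₂) ∧
  ManyDisjointPaths D (Set.range R₂) (Set.range R₁)

/-- Two vertices lie in the same strong component. -/
def StrongEquiv (D : Digraph V) (u v : V) : Prop :=
  Relation.ReflTransGen D.Adj u v ∧ Relation.ReflTransGen D.Adj v u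

/-- From a reflexive-transitive chain, extract a nodup chain list with the same endpoints. -/
lemma exists_nodup_chain {R : V → V → Prop} {a b : V} (h : Relation.ReflTransGen R a b) :
    ∃ p : List V, p ≠ [] ∧ p.Nodup ∧ p.Chain' R ∧ p.head? = some a ∧ p.getLast? = some b ∧
      ∀ x ∈ p, Relation.ReflTransGen R a x ∧ Relation.ReflTransGen R x b := by
  induction h with
  | refl =>
    exact ⟨[a], by simp, by simp, List.isChain_singleton _, by simp, by simp, by
      intro x hx; simp at hx; subst hx; exact ⟨.refl, .refl⟩⟩
  | @tail b c hab hbc ih =>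
    obtain ⟨p, hne, hnd, hch, hhd, hlast, hmem⟩ := ih
    by_cases hc : c ∈ p
    · -- take the prefix of p up to the first occurrence of c
      have : ∃ q, q <+: p ∧ q ≠ [] ∧ q.head? = p.head? ∧ q.getLast? = some c := by
        clear hnd hch hhd hlast hmem hne
        induction p with
        | nil => simp at hc
        | cons x xs ihp =>
          by_cases hxc : x = c
          · exact ⟨[c], by simp [hxc], by simp, by simp [hxc], by simp⟩
          · have hcxs : c ∈ xs := by
              rcases List.mem_cons.mp hc with h | h
              · exact absurd h.symm hxc
              · exact h
            obtain ⟨q, hq1, hq2, hq3, hq4⟩ := ihp hcxs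
            obtain ⟨y, ys, rfl⟩ := List.exists_cons_of_ne_nil hq2
            refine ⟨x :: y :: ys, ?_, by simp, by simp, ?_⟩
            · obtain ⟨t, ht⟩ := hq1
              exact ⟨t, by simp [← ht]⟩
            · rw [List.getLast?_cons_cons]; exact hq4
      obtain ⟨q, hq1, hq2, hq3, hq4⟩ := this
      refine ⟨q, hq2, hnd.sublist hq1.sublist, hch.prefix hq1, hq3.trans hhd, hq4, ?_⟩
      intro x hx
      have hxp : x ∈ p := hq1.subset hx
      exact ⟨(hmem x hxp).1, ((hmem x hxp).2).tail hbc⟩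
    · refine ⟨p ++ [c], by simp, ?_, ?_, ?_, by simp [List.getLast?_concat], ?_⟩
      · simp [List.nodup_append, hnd, hc]
        intro x hx h; exact hc (h ▸ hx)
      · show (p ++ [c]).IsChain R
        rw [List.isChain_append]
        refine ⟨hch, by simp, ?_⟩
        intro x hx y hy
        simp at hy; subst hy
        rw [hlast] at hx; simp at hx; subst hx; exact hbc
      · obtain ⟨x, xs, rfl⟩ := List.exists_cons_of_ne_nil hne
        simpa using hhd
      · intro x hx
        rcases List.mem_append.mp hx with h | h
        · exact ⟨(hmem x h).1, ((hmem x h).2).tail hbc⟩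
        · simp at h; subst h; exact ⟨hab.tail hbc, .refl⟩

/-- A chain from outside a class into it must cross the boundary. -/
lemma crossing {R : V → V → Prop} {P : V → Prop} {x y : V}
    (h : Relation.ReflTransGen R x y) (hy : P y) (hx : ¬ P x) :
    ∃ u c, ¬ P u ∧ P c ∧ R u c ∧ Relation.ReflTransGen R x u := by
  induction h using Relation.ReflTransGen.head_induction_on with
  | refl => exact absurd hy hx
  | head r h ih =>
    rename_i a c'
    by_cases hc' : P c'
    · exact ⟨a, c', hx, hc', r, .refl⟩
    · obtain ⟨u, c, h1, h2, h3, h4⟩ := ih hc'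
      exact ⟨u, c, h1, h2, h3, Relation.ReflTransGen.head r h4⟩

/-- Within a strong component, any two vertices are joined by a nodup directed path
staying in the component. -/
lemma strong_path (D : Digraph V) {a b : V} (h : StrongEquiv D a b) :
    ∃ p : List V, p ≠ [] ∧ p.Nodup ∧ p.Chain' D.Adj ∧ p.head? = some a ∧
      p.getLast? = some b ∧ ∀ x ∈ p, StrongEquiv D x b := by
  obtain ⟨p, h1, h2, h3, h4, h5, h6⟩ := exists_nodup_chain h.1
  exact ⟨p, h1, h2, h3, h4, h5, fun x hx => ⟨(h6 x hx).2, h.2.trans (h6 x hx).1⟩⟩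

private def flatStep (L : ℕ → List V) : ℕ × List V → ℕ × List V
  | (n, _ :: b :: t) => (n, b :: t)
  | (n, _) => (n + 1, L (n + 1))

private def flatSt (L : ℕ → List V) : ℕ → ℕ × List V
  | 0 => (0, L 0)
  | k + 1 => flatStep L (flatSt L k)

/-- Flattening infinitely many disjoint linked segments into an injective ray. -/
lemma flatten_ray [Inhabited V] (R : V → V → Prop) (L : ℕ → List V)
    (hne : ∀ n, L n ≠ [])
    (hnd : ∀ n, (L n).Nodup)
    (hch : ∀ n, (L n).Chain' R)
    (hlink : ∀ n a b, (L n).getLast? = some a → (L (n + 1)).head? = some b → R a b)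
    (hdisj : ∀ m n, m ≠ n → ∀ x ∈ L m, x ∉ L n) :
    ∃ f : ℕ → V, Function.Injective f ∧ ∀ n, R (f n) (f (n + 1)) := by
  classical
  set st := flatSt L with hst
  have hsucc : ∀ k, st (k + 1) = flatStep L (st k) := fun k => rfl
  have good : ∀ k, (st k).2 ≠ [] ∧ (st k).2 <:+ L (st k).1 := by
    intro k
    induction k with
    | zero => exact ⟨hne 0, List.suffix_refl _⟩
    | succ k ih =>
      obtain ⟨h1, h2⟩ := ih
      rw [hsucc k]
      rcases hk : st k with ⟨n, l⟩
      rw [hk] at h1 h2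
      match l, h1 with
      | [a], _ => exact ⟨hne (n + 1), List.suffix_refl _⟩
      | a :: b :: t, _ =>
        exact ⟨List.cons_ne_nil _ _, (List.tail_suffix (a :: b :: t)).trans h2⟩
  set f : ℕ → V := fun k => (st k).2.headI with hf
  have hmemf : ∀ k, f k ∈ L (st k).1 := by
    intro k
    obtain ⟨h1, h2⟩ := good k
    apply h2.subset
    obtain ⟨a, t, ht⟩ := List.exists_cons_of_ne_nil h1
    rw [hf]; simp only []
    rw [ht]; simp
  have mono1 : ∀ k, (st k).1 ≤ (st (k + 1)).1 := by
    intro k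
    rw [hsucc k]
    rcases hk : st k with ⟨n, l⟩
    match l with
    | [] => simp [flatStep]
    | [a] => simp [flatStep]
    | a :: b :: t => simp [flatStep]
  have mono : ∀ j k, j ≤ k → (st j).1 ≤ (st k).1 := by
    intro j k hjk
    induction k, hjk using Nat.le_induction with
    | base => exact le_refl _
    | succ k hk ih => exact ih.trans (mono1 k)
  have sameSeg : ∀ j k, j ≤ k → (st j).1 = (st k).1 →
      (st k).2 <:+ (st j).2 ∧ (st k).2.length + (k - j) = (st j).2.length := by
    intro j k hjk
    induction k, hjk using Nat.le_induction with
    | base => intro _; simp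
    | succ k hk ih =>
      intro hseg
      have h1 : (st j).1 = (st k).1 :=
        le_antisymm (mono j k hk) (by rw [hseg]; exact mono1 k)
      obtain ⟨ihs, ihl⟩ := ih h1
      have h2 : (st k).1 = (st (k + 1)).1 := by omega
      have hgk := good k
      rw [hsucc k] at hseg h2 ⊢
      rcases hkk : st k with ⟨n, l⟩
      rw [hkk] at ihs ihl h2 hgk
      match l, hgk.1 with
      | [a], _ => simp [flatStep] at h2
      | a :: b :: t, _ =>
        simp only [flatStep] at *
        constructor
        · exact (List.tail_suffix (a :: b :: t)).trans ihs
        · simp at ihl ⊢; omega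
  refine ⟨f, ?_, ?_⟩
  · have key : ∀ j k, j < k → f j ≠ f k := by
      intro j k hjk heq
      rcases eq_or_lt_of_le (mono j k hjk.le) with hseg | hseg
      · obtain ⟨⟨t, ht⟩, hlen⟩ := sameSeg j k hjk.le hseg
        have hlt : (st k).2.length < (st j).2.length := by omega
        have htne : t ≠ [] := by
          intro h; rw [h] at ht; simp at ht; rw [ht] at hlt; omega
        obtain ⟨c, t', rfl⟩ := List.exists_cons_of_ne_nil htne
        have hndj : (st j).2.Nodup := (hnd _).sublist ((good j).2).sublist
        rw [← ht] at hndj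
        have hfj : f j = c := by rw [hf]; simp only []; rw [← ht]; simp
        have hfk : f k ∈ (st k).2 := by
          obtain ⟨a, s, hs⟩ := List.exists_cons_of_ne_nil (good k).1
          rw [hf]; simp only []; rw [hs]; simp
        rw [← heq, hfj] at hfk
        simp at hndj
        exact hndj.1.2 hfk
      · have h1 := hmemf j
        have h2 := hmemf k
        rw [heq] at h1
        exact hdisj _ _ (Nat.ne_of_lt hseg) _ h1 h2
    intro j k heq
    rcases lt_trichotomy j k with h | h | h
    · exact absurd heq (key j k h)
    · exact h
    · exact absurd heq.symm (key k j h)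
  · intro k
    have hgk := good k
    have hg1 := (good (k + 1)).1
    rw [hf]; simp only []
    rw [hsucc k] at hg1 ⊢
    rcases hkk : st k with ⟨n, l⟩
    rw [hkk] at hgk
    match l, hgk.1 with
    | [a], _ =>
      simp only [flatStep]
      obtain ⟨b, s, hsb⟩ := List.exists_cons_of_ne_nil (hne (n + 1))
      rw [hsb]
      simp only [List.headI]
      refine hlink n a b ?_ (by rw [hsb]; rfl)
      obtain ⟨t, ht⟩ := hgk.2
      rw [← ht]
      exact List.getLast?_concat
    | a :: b :: t, _ =>
      simp only [flatStep, List.headI]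
      have : (a :: b :: t).Chain' R := (hch n).suffix hgk.2
      exact (List.isChain_cons_cons.mp this).1

/-- Proposition 4.4: an infinite digraph all of whose strong components are finite, such
that all but finitely many strong components have an outgoing edge, contains an in-ray,
an out-ray, or a vertex of infinite in-degree. -/
theorem stmt1 [Infinite V] (D : Digraph V)
    (hfin : ∀ v : V, {u | StrongEquiv D u v}.Finite)
    (hout : {v : V | ¬ ∃ u w, StrongEquiv D u v ∧ ¬ StrongEquiv D w v ∧ D.Adj u w}.Finite) :
    (∃ f, IsInRay D f) ∨ (∃ f, IsOutRay D f) ∨ ∃ v : V, {u | D.Adj u v}.Infinite := by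
  classical
  haveI : Inhabited V := Classical.inhabited_of_nonempty inferInstance
  by_contra hcon
  push_neg at hcon
  obtain ⟨hnoin, hnoout, hdeg⟩ := hcon
  have hdeg' : ∀ v : V, {u | D.Adj u v}.Finite := fun v => hdeg v
  have seSymm : ∀ {a b : V}, StrongEquiv D a b → StrongEquiv D b a := fun h => ⟨h.2, h.1⟩
  have seRefl : ∀ a : V, StrongEquiv D a a := fun a => ⟨.refl, .refl⟩
  set B : V → Set V := fun v => {u | Relation.ReflTransGen D.Adj u v} with hBdef
  -- Step 1: every backward-reachability set is finite, else we construct an in-ray.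
  have hBfin : ∀ v, (B v).Finite := by
    intro v
    by_contra hvf
    have hvinf : (B v).Infinite := hvf
    have step : ∀ y : V, (B y).Infinite →
        ∃ y' c, D.Adj y' c ∧ StrongEquiv D c y ∧ ¬ StrongEquiv D y' y ∧ (B y').Infinite := by
      intro y hy
      by_contra hno
      push_neg at hno
      have hSinf : (B y \ {u | StrongEquiv D u y}).Infinite := hy.diff (hfin y)
      set N := {u | ¬ StrongEquiv D u y ∧ ∃ c, StrongEquiv D c y ∧ D.Adj u c} with hN
      have hNfin : N.Finite := by
        apply ((hfin y).biUnion (fun c _ => hdeg' c)).subset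
        rintro u ⟨hu1, c, hc1, hc2⟩
        exact Set.mem_biUnion hc1 hc2
      have hcover : (B y \ {u | StrongEquiv D u y}) ⊆ ⋃ u ∈ N, B u := by
        rintro z ⟨hz1, hz2⟩
        obtain ⟨u, c, h1, h2, h3, h4⟩ :=
          crossing (P := fun w => StrongEquiv D w y) hz1 (seRefl y) hz2
        exact Set.mem_biUnion (show u ∈ N from ⟨h1, c, h2, h3⟩) h4
      have hfinU : (⋃ u ∈ N, B u).Finite := by
        apply hNfin.biUnion
        rintro u ⟨hu1, c, hc1, hc2⟩
        exact hno u c hc2 hc1 hu1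
      exact hSinf (hfinU.subset hcover)
    -- build the backward sequence of components
    have hstepT : ∀ t : {y : V // (B y).Infinite},
        ∃ s : {y : V // (B y).Infinite} × V,
          D.Adj s.1.1 s.2 ∧ StrongEquiv D s.2 t.1 ∧ ¬ StrongEquiv D s.1.1 t.1 := by
      intro t
      obtain ⟨y', c, h1, h2, h3, h4⟩ := step t.1 t.2
      exact ⟨(⟨y', h4⟩, c), h1, h2, h3⟩
    let Y : ℕ → {y : V // (B y).Infinite} × V := fun n =>
      Nat.rec (⟨⟨v, hvinf⟩, v⟩) (fun _ p => (hstepT p.1).choose) n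
    set y : ℕ → V := fun n => ((Y n).1 : {y : V // (B y).Infinite}).1 with hy
    set c : ℕ → V := fun n => (Y (n + 1)).2 with hc
    have hstep : ∀ n, D.Adj (y (n + 1)) (c n) ∧ StrongEquiv D (c n) (y n) ∧
        ¬ StrongEquiv D (y (n + 1)) (y n) := fun n => (hstepT (Y n).1).choose_spec
    have hreach : ∀ n, Relation.ReflTransGen D.Adj (y (n + 1)) (y n) := fun n =>
      Relation.ReflTransGen.head (hstep n).1 (hstep n).2.1.1
    have hreach' : ∀ m n, m ≤ n → Relation.ReflTransGen D.Adj (y n) (y m) := by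
      intro m n h
      induction n, h using Nat.le_induction with
      | base => exact .refl
      | succ n hn ih => exact (hreach n).trans ih
    have hneq : ∀ m n, m < n → ¬ StrongEquiv D (y m) (y n) := by
      intro m n h heq
      exact (hstep m).2.2 ⟨hreach m, heq.1.trans (hreach' (m + 1) n h)⟩
    have hpaths : ∀ n, ∃ p : List V, p ≠ [] ∧ p.Nodup ∧ p.Chain' D.Adj ∧
        p.head? = some (c n) ∧ p.getLast? = some (y n) ∧ ∀ z ∈ p, StrongEquiv D z (y n) :=
      fun n => strong_path D (hstep n).2.1
    choose p hp1 hp2 hp3 hp4 hp5 hp6 using hpaths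
    obtain ⟨f, hfinj, hfadj⟩ := flatten_ray (fun a b => D.Adj b a) (fun n => (p n).reverse)
      (fun n => by simp [hp1 n])
      (fun n => List.nodup_reverse.mpr (hp2 n))
      (fun n => List.isChain_reverse.mpr (hp3 n))
      (by
        intro n a b ha hb
        rw [List.getLast?_reverse, hp4 n] at ha
        rw [List.head?_reverse, hp5 (n + 1)] at hb
        obtain rfl : c n = a := by injection ha
        obtain rfl : y (n + 1) = b := by injection hb
        exact (hstep n).1)
      (by
        intro m n hmn z hzm hzn
        rw [List.mem_reverse] at hzm hzn
        have e1 := hp6 m z hzm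
        have e2 := hp6 n z hzn
        have : StrongEquiv D (y m) (y n) := ⟨e1.2.trans e2.1, e2.2.trans e1.1⟩
        rcases hmn.lt_or_gt with h | h
        · exact hneq m n h this
        · exact hneq n m h (seSymm this))
    exact hnoin f ⟨hfinj, hfadj⟩
  -- Step 2: construct an out-ray.
  have hU : (⋃ v ∈ {v : V | ¬ ∃ u w, StrongEquiv D u v ∧ ¬ StrongEquiv D w v ∧ D.Adj u w},
      B v).Finite := hout.biUnion (fun v _ => hBfin v)
  obtain ⟨x0, hx0⟩ := hU.infinite_compl.nonempty
  have hx0F : ∀ z, Relation.ReflTransGen D.Adj x0 z →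
      ∃ u w, StrongEquiv D u z ∧ ¬ StrongEquiv D w z ∧ D.Adj u w := by
    intro z hz
    by_contra h
    exact hx0 (Set.mem_biUnion h hz)
  have hstepT' : ∀ t : {x : V // Relation.ReflTransGen D.Adj x0 x},
      ∃ s : {x : V // Relation.ReflTransGen D.Adj x0 x} × V,
        StrongEquiv D s.2 t.1 ∧ ¬ StrongEquiv D s.1.1 t.1 ∧ D.Adj s.2 s.1.1 := by
    intro t
    obtain ⟨u, w, h1, h2, h3⟩ := hx0F t.1 t.2
    exact ⟨(⟨w, (t.2.trans h1.2).tail h3⟩, u), h1, h2, h3⟩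
  let X : ℕ → {x : V // Relation.ReflTransGen D.Adj x0 x} × V := fun n =>
    Nat.rec (⟨⟨x0, .refl⟩, x0⟩) (fun _ pr => (hstepT' pr.1).choose) n
  set x : ℕ → V := fun n => ((X n).1 : {x : V // Relation.ReflTransGen D.Adj x0 x}).1 with hx
  set u : ℕ → V := fun n => (X (n + 1)).2 with hu
  have hstep2 : ∀ n, StrongEquiv D (u n) (x n) ∧ ¬ StrongEquiv D (x (n + 1)) (x n) ∧
      D.Adj (u n) (x (n + 1)) := fun n => (hstepT' (X n).1).choose_spec
  have hreach2 : ∀ n, Relation.ReflTransGen D.Adj (x n) (x (n + 1)) := fun n =>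
    ((hstep2 n).1.2).tail (hstep2 n).2.2
  have hreach2' : ∀ m n, m ≤ n → Relation.ReflTransGen D.Adj (x m) (x n) := by
    intro m n h
    induction n, h using Nat.le_induction with
    | base => exact .refl
    | succ n hn ih => exact ih.trans (hreach2 n)
  have hneq2 : ∀ m n, m < n → ¬ StrongEquiv D (x m) (x n) := by
    intro m n h heq
    exact (hstep2 m).2.1 ⟨(hreach2' (m + 1) n h).trans heq.2, hreach2 m⟩
  have hpaths2 : ∀ n, ∃ p : List V, p ≠ [] ∧ p.Nodup ∧ p.Chain' D.Adj ∧
      p.head? = some (x n) ∧ p.getLast? = some (u n) ∧ ∀ z ∈ p, StrongEquiv D z (u n) :=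
    fun n => strong_path D (seSymm (hstep2 n).1)
  choose p hp1 hp2 hp3 hp4 hp5 hp6 using hpaths2
  obtain ⟨f, hfinj, hfadj⟩ := flatten_ray D.Adj p hp1 hp2 hp3
    (by
      intro n a b ha hb
      rw [hp5 n] at ha
      rw [hp4 (n + 1)] at hb
      obtain rfl : u n = a := by injection ha
      obtain rfl : x (n + 1) = b := by injection hb
      exact (hstep2 n).2.2)
    (by
      intro m n hmn z hzm hzn
      have e1 := hp6 m z hzm
      have e2 := hp6 n z hzn
      have f1 : StrongEquiv D z (x m) := ⟨e1.1.trans (hstep2 m).1.1, (hstep2 m).1.2.trans e1.2⟩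
      have f2 : StrongEquiv D z (x n) := ⟨e2.1.trans (hstep2 n).1.1, (hstep2 n).1.2.trans e2.2⟩
      have : StrongEquiv D (x m) (x n) := ⟨f1.2.trans f2.1, f2.2.trans f1.1⟩
      rcases hmn.lt_or_gt with h | h
      · exact hneq2 m n h this
      · exact hneq2 n m h (seSymm this))
  exact hnoout f ⟨hfinj, hfadj⟩
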